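/- Let E be a metrizable topological vector space and N ⊆ E a closed subspace. Then the completion of the quotient E/N is isomorphic (as a topological vector space) to Ê/N̄, where Ê is the completion of E and N̄ is the closure of N in Ê. -/

import Mathlib

open Topology Filter

/-- A group hom between topological additive groups whose domain's neighborhood filter at `0`
is the comap of the neighborhood filter at `0` is inducing. -/
theorem isInducing_of_nhds_zero_eq {G H : Type*} [AddGroup G] [AddGroup H]
    [TopologicalSpace G] [TopologicalSpace H] [IsTopologicalAddGroup G] [IsTopologicalAddGroup H]
    (f : G →+ H) (h : 𝓝 (0 : G) = Filter.comap f (𝓝 0)) : Topology.IsInducing f := by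
  constructor
  refine IsTopologicalAddGroup.ext ‹_› (topologicalAddGroup_induced f) ?_
  rw [nhds_induced, map_zero, h]

/-- For a metrizable topological vector space `E` with completion `Ê` and a closed subspace
`N ⊆ E`, the quotient `Ê/N̄` (where `N̄` is the closure of `N` in `Ê`) is a completion of
`E/N`: the natural map `E/N → Ê/N̄` is inducing with dense range and `Ê/N̄` is complete.
In other words, the completion of `E/N` is isomorphic as a TVS to `Ê/N̄`. -/
theorem completion_of_quotient (E : Type*) [AddCommGroup E] [Module ℝ E] [TopologicalSpace E]
    [IsTopologicalAddGroup E] [ContinuousSMul ℝ E] [TopologicalSpace.MetrizableSpace E]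
    (Ehat : Type*) [AddCommGroup Ehat] [Module ℝ Ehat] [UniformSpace Ehat]
    [IsUniformAddGroup Ehat] [ContinuousSMul ℝ Ehat] [CompleteSpace Ehat]
    [TopologicalSpace.MetrizableSpace Ehat]
    (ι : E →L[ℝ] Ehat) (hι : Topology.IsInducing ι) (hdense : DenseRange ι)
    (N : Submodule ℝ E) (hN : IsClosed (N : Set E)) :
    let Nbar : Submodule ℝ Ehat := (N.map (ι : E →ₗ[ℝ] Ehat)).topologicalClosure
    let q : (E ⧸ N) →ₗ[ℝ] (Ehat ⧸ Nbar) :=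
      N.mapQ Nbar (ι : E →ₗ[ℝ] Ehat)
        (fun x hx => Submodule.le_topologicalClosure _ (Submodule.mem_map_of_mem hx))
    Topology.IsInducing ⇑q ∧ DenseRange ⇑q ∧
      @CompleteSpace (Ehat ⧸ Nbar) (IsTopologicalAddGroup.rightUniformSpace _) := by
  intro Nbar q
  -- notation for the two quotient maps
  set π : E → E ⧸ N := fun x => Submodule.Quotient.mk x with hπ
  set p : Ehat → Ehat ⧸ Nbar := fun x => Submodule.Quotient.mk x with hp
  have hcomm : ∀ x : E, q (π x) = p (ι x) := fun x => rfl
  have hπcont : Continuous π := continuous_quot_mk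
  have hpcont : Continuous p := continuous_quot_mk
  have hpopen : IsOpenMap p := QuotientAddGroup.isOpenMap_coe
  have hπsurj : Function.Surjective π := Submodule.Quotient.mk_surjective N
  have hpsurj : Function.Surjective p := Submodule.Quotient.mk_surjective Nbar
  -- continuity of q
  have hqcont : Continuous q := continuous_quot_lift _ (hpcont.comp ι.continuous)
  -- the key filter equality at 0
  have hkey : 𝓝 (0 : E ⧸ N) = Filter.comap q (𝓝 0) := by
    apply le_antisymm
    · exact (hqcont.tendsto 0).le_comap.trans (le_of_eq (by rw [map_zero]))
    · -- for every U ∈ 𝓝 0 downstairs, find a nbhd upstairs pulling back inside U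
      intro U hU
      have hV : π ⁻¹' U ∈ 𝓝 (0 : E) := by
        have h0 : π 0 = 0 := by simp [hπ]
        exact hπcont.continuousAt.preimage_mem_nhds (by rwa [h0])
      rw [hι.nhds_eq_comap, map_zero] at hV
      obtain ⟨W₁, hW₁, hW₁sub⟩ := Filter.mem_comap.mp hV
      obtain ⟨W₀, hW₀, hW₀sub⟩ := exists_nhds_half_neg hW₁
      have hp0 : p 0 = 0 := by simp [hp]
      refine Filter.mem_comap.mpr ⟨p '' W₀, by simpa [hp0] using hpopen.image_mem_nhds hW₀, ?_⟩
      intro y hy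
      obtain ⟨e, rfl⟩ := hπsurj y
      obtain ⟨w, hw, hqw⟩ := hy
      have hmem : ι e - w ∈ Nbar := by
        rw [← Submodule.Quotient.eq]
        exact (hcomm e).symm.trans hqw.symm
      have hmem' : ι e - w ∈ closure ((N.map (ι : E →ₗ[ℝ] Ehat) : Set Ehat)) := hmem
      have hnb : (fun z => z - (ι e - w)) ⁻¹' W₀ ∈ 𝓝 (ι e - w) := by
        refine ContinuousAt.preimage_mem_nhds ?_ (by simpa using hW₀)
        exact (continuous_id.sub continuous_const).continuousAt
      obtain ⟨z, hzW, hzS⟩ := mem_closure_iff_nhds.mp hmem' _ hnb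
      obtain ⟨n, hnN, rfl⟩ := hzS
      have h1 : ι (e - n) ∈ W₁ := by
        have := hW₀sub w hw _ hzW
        have heq : w - ((ι : E →ₗ[ℝ] Ehat) n - (ι e - w)) = ι (e - n) := by
          rw [map_sub]
          show w - (ι n - (ι e - w)) = ι e - ι n
          abel
        rwa [heq] at this
      have h2 : π (e - n) ∈ U := hW₁sub h1
      have h3 : π (e - n) = π e := (Submodule.Quotient.eq N).mpr (by simpa using N.neg_mem hnN)
      rwa [h3] at h2
  refine ⟨?_, ?_, ?_⟩
  · exact isInducing_of_nhds_zero_eq q.toAddMonoidHom hkey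
  · have hpq : DenseRange (p ∘ ι) := hpsurj.denseRange.comp hdense hpcont
    have hsub : Set.range (p ∘ ⇑ι) ⊆ Set.range ⇑q := by
      rintro _ ⟨x, rfl⟩; exact ⟨π x, (hcomm x).symm ▸ rfl⟩
    exact Dense.mono hsub hpq
  · exact QuotientAddGroup.completeSpace_right Ehat Nbar.toAddSubgroup
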